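/- Let h be a differentiable map from ℝ^m to the D×D complex matrices. Then the differential of x ↦ e^{h(x)} satisfies d e^{h(x)} = ∫₀¹ e^{u h(x)} (d h(x)) e^{(1-u) h(x)} du. -/

import Mathlib

open Matrix MeasureTheory

attribute [local instance] Matrix.normedAddCommGroup Matrix.normedSpace

namespace MatExpAux

open NormedSpace intervalIntegral

variable {𝔸 : Type*} [NormedRing 𝔸] [NormedAlgebra ℂ 𝔸] [CompleteSpace 𝔸]

lemma expC_continuous : Continuous (exp : 𝔸 → 𝔸) :=
  continuous_iff_continuousAt.2 fun x => (exp_analytic (𝕂 := ℂ) x).continuousAt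

lemma expR_deriv (A : 𝔸) (t : ℝ) :
    HasDerivAt (fun u : ℝ => exp (u • A)) (exp (t • A) * A) t := by
  simpa using hasDerivAt_exp_smul_const (𝕂 := ℝ) A t

lemma psi_deriv (A B : 𝔸) (t u : ℝ) :
    HasDerivAt (fun u : ℝ => exp (u • (A + t • B)) * exp ((1 - u) • A))
      (t • (exp (u • (A + t • B)) * B * exp ((1 - u) • A))) u := by
  have d1 := expR_deriv (A + t • B) u
  have h0 : HasDerivAt (fun u : ℝ => 1 - u) (-1) u := by
    simpa using (hasDerivAt_id u).const_sub 1
  have d2 : HasDerivAt (fun u : ℝ => exp ((1 - u) • A))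
      (-(exp ((1 - u) • A) * A)) u := by
    have := (expR_deriv A (1 - u)).scomp u h0
    simpa [Function.comp_def] using this
  have := d1.mul d2
  convert this using 1
  · rfl
  have hc : A * exp ((1 - u) • A) = exp ((1 - u) • A) * A :=
    (((Commute.refl A).smul_left (1 - u)).exp_left).symm.eq
  rw [mul_neg, ← hc, ← sub_eq_add_neg,
    mul_assoc (exp (u • (A + t • B))) (A + t • B), ← mul_sub, ← sub_mul,
    add_sub_cancel_left, smul_mul_assoc, mul_smul_comm, mul_assoc]

lemma exp_sub_exp (A B : 𝔸) (t : ℝ) :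
    exp (A + t • B) - exp A
      = t • ∫ u in (0:ℝ)..1, exp (u • (A + t • B)) * B * exp ((1 - u) • A) := by
  have hcont : Continuous (fun u : ℝ =>
      t • (exp (u • (A + t • B)) * B * exp ((1 - u) • A))) := by
    apply Continuous.const_smul
    exact ((expC_continuous.comp (continuous_id.smul continuous_const)).mul
      continuous_const).mul
      (expC_continuous.comp ((continuous_const.sub continuous_id).smul continuous_const))
  have hFTC := intervalIntegral.integral_eq_sub_of_hasDerivAt
    (f := fun u : ℝ => exp (u • (A + t • B)) * exp ((1 - u) • A))
    (fun u _ => psi_deriv A B t u) (hcont.intervalIntegrable 0 1)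
  rw [intervalIntegral.integral_smul] at hFTC
  rw [hFTC]
  simp

theorem fderiv_exp_apply (A B : 𝔸) {f' : 𝔸 →L[ℝ] 𝔸} (hf : HasFDerivAt (exp) f' A) :
    f' B = ∫ u in (0:ℝ)..1, exp (u • A) * B * exp ((1 - u) • A) := by
  set G : ℝ → 𝔸 := fun t => ∫ u in (0:ℝ)..1,
      exp (u • (A + t • B)) * B * exp ((1 - u) • A) with hG
  have hGc : Continuous G := by
    apply intervalIntegral.continuous_parametric_intervalIntegral_of_continuous'
    apply Continuous.mul
    · apply Continuous.mul
      · apply expC_continuous.comp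
        exact (continuous_snd.smul (continuous_const.add
          (continuous_fst.smul continuous_const)))
      · exact continuous_const
    · exact expC_continuous.comp
        ((continuous_const.sub continuous_snd).smul continuous_const)
  have h1 : HasDerivAt (fun t : ℝ => exp (A + t • B)) (G 0) 0 := by
    rw [hasDerivAt_iff_tendsto_slope]
    have key : ∀ t ∈ ({(0:ℝ)}ᶜ : Set ℝ),
        G t = slope (fun t : ℝ => exp (A + t • B)) 0 t := by
      intro t ht
      have ht' : (t : ℝ) ≠ 0 := ht
      have := exp_sub_exp A B t
      rw [slope_def_module]
      simp only [zero_smul, add_zero, this, ← hG, smul_smul, sub_zero, inv_mul_cancel₀ ht', one_smul]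
      rfl
    refine Filter.Tendsto.congr'
      (Filter.eventually_iff_exists_mem.2 ⟨{(0:ℝ)}ᶜ, self_mem_nhdsWithin, key⟩)
      ((hGc.tendsto 0).mono_left nhdsWithin_le_nhds)
  have hline : HasDerivAt (fun t : ℝ => A + t • B) B 0 := by
    simpa using ((hasDerivAt_id (0:ℝ)).smul_const B).const_add A
  have hf' : HasFDerivAt (exp) f' ((fun t : ℝ => A + t • B) 0) := by simpa using hf
  have h2 : HasDerivAt (fun t : ℝ => exp (A + t • B)) (f' B) 0 :=
    hf'.comp_hasDerivAt 0 hline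
  have hBG := h2.unique h1
  rw [hBG, hG]
  simp

theorem exp_hasFDerivAt (A : 𝔸) : ∃ f' : 𝔸 →L[ℝ] 𝔸, HasFDerivAt (exp) f' A :=
  ⟨_, ((exp_analytic (𝕂 := ℂ) A).differentiableAt.hasFDerivAt).restrictScalars ℝ⟩



variable {D : ℕ}

noncomputable def matCLE (D : ℕ) :
    Matrix (Fin D) (Fin D) ℂ ≃ₐ[ℂ] ((Fin D → ℂ) →L[ℂ] (Fin D → ℂ)) :=
  AlgEquiv.ofLinearEquiv
    (Matrix.toLinAlgEquiv'.toLinearEquiv ≪≫ₗ LinearMap.toContinuousLinearMap)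
    (by
      apply ContinuousLinearMap.ext
      intro x
      show Matrix.toLin' (1 : Matrix (Fin D) (Fin D) ℂ) x = x
      rw [Matrix.toLin'_one]
      rfl)
    (by
      intro M N
      apply ContinuousLinearMap.ext
      intro x
      show Matrix.toLin' (M * N) x = Matrix.toLin' M (Matrix.toLin' N x)
      rw [Matrix.toLin'_mul]
      rfl)

noncomputable def eCLM (D : ℕ) :
    Matrix (Fin D) (Fin D) ℂ →L[ℂ] ((Fin D → ℂ) →L[ℂ] (Fin D → ℂ)) :=
  ⟨(matCLE D).toLinearMap, (matCLE D).toLinearMap.continuous_of_finiteDimensional⟩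

noncomputable def sCLM (D : ℕ) :
    ((Fin D → ℂ) →L[ℂ] (Fin D → ℂ)) →L[ℂ] Matrix (Fin D) (Fin D) ℂ :=
  haveI : FiniteDimensional ℂ ((Fin D → ℂ) →L[ℂ] (Fin D → ℂ)) :=
    Module.Finite.equiv (matCLE D).toLinearEquiv
  ⟨(matCLE D).symm.toLinearMap, (matCLE D).symm.toLinearMap.continuous_of_finiteDimensional⟩

@[simp] lemma eCLM_apply (M : Matrix (Fin D) (Fin D) ℂ) : eCLM D M = matCLE D M := rfl
@[simp] lemma sCLM_apply (f : (Fin D → ℂ) →L[ℂ] (Fin D → ℂ)) :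
    sCLM D f = (matCLE D).symm f := rfl

lemma exp_transfer (M : Matrix (Fin D) (Fin D) ℂ) :
    exp M = (matCLE D).symm (exp (matCLE D M)) := by
  have hs : Summable fun n : ℕ => ((Nat.factorial n : ℂ))⁻¹ • (matCLE D M) ^ n :=
    expSeries_summable' (𝕂 := ℂ) (matCLE D M)
  rw [exp_eq_tsum ℂ, exp_eq_tsum ℂ]
  have := (sCLM D).map_tsum hs
  simp only [sCLM_apply] at this
  rw [this]
  refine tsum_congr fun n => ?_
  rw [_root_.map_smul, _root_.map_pow, AlgEquiv.symm_apply_apply]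


end MatExpAux

open NormedSpace intervalIntegral MatExpAux

set_option maxHeartbeats 1000000

/-- Differential of the matrix exponential along a differentiable matrix-valued map `h`:
`d e^{h(x)} = ∫₀¹ e^{u h(x)} (dh(x)) e^{(1-u) h(x)} du`. -/
theorem fderiv_matrix_exp_integral {m D : ℕ}
    (h : (Fin m → ℝ) → Matrix (Fin D) (Fin D) ℂ) (hdiff : Differentiable ℝ h)
    (x v : Fin m → ℝ) :
    fderiv ℝ (fun x => NormedSpace.exp (h x)) x v
      = ∫ u in (0:ℝ)..1,
          NormedSpace.exp (u • h x) * (fderiv ℝ h x v) * NormedSpace.exp ((1 - u) • h x) := by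
  set A := h x with hA
  set B := fderiv ℝ h x v with hB
  obtain ⟨f', hf'⟩ := exp_hasFDerivAt (matCLE D A)
  set eR := (eCLM D).restrictScalars ℝ with heR
  set sR := (sCLM D).restrictScalars ℝ with hsR
  -- derivative of exp on matrices
  have hcomp : HasFDerivAt (fun M : Matrix (Fin D) (Fin D) ℂ => exp M)
      (sR.comp (f'.comp eR)) A := by
    have h2 := hf'.comp A (eR.hasFDerivAt (x := A))
    have h3 := (sR.hasFDerivAt).comp A h2
    have hfun : (fun M : Matrix (Fin D) (Fin D) ℂ => sR (exp (eR M)))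
        = fun M => exp M := by
      funext M
      simp only [heR, hsR, ContinuousLinearMap.coe_restrictScalars', eCLM_apply, sCLM_apply,
        ← exp_transfer]
    rw [← hfun]
    exact h3
  have hx : HasFDerivAt (fun y => exp (h y))
      ((sR.comp (f'.comp eR)).comp (fderiv ℝ h x)) x :=
    hcomp.comp x (hdiff x).hasFDerivAt
  rw [hx.fderiv]
  have hkey := fderiv_exp_apply (matCLE D A) (matCLE D B) hf'
  -- integrability of the V-valued integrand
  have hc : Continuous (fun u : ℝ =>
      exp (u • matCLE D A) * matCLE D B * exp ((1 - u) • matCLE D A)) :=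
    ((expC_continuous.comp (continuous_id.smul continuous_const)).mul continuous_const).mul
      (expC_continuous.comp ((continuous_const.sub continuous_id).smul continuous_const))
  have hint := (sR.intervalIntegral_comp_comm
    (f := fun u : ℝ => exp (u • matCLE D A) * matCLE D B * exp ((1 - u) • matCLE D A))
    (μ := MeasureTheory.volume) (a := 0) (b := 1)
    (hc.intervalIntegrable 0 1)).symm
  have hterm : ∀ u : ℝ,
      (matCLE D).symm (exp (u • matCLE D A) * matCLE D B * exp ((1 - u) • matCLE D A))
        = exp (u • A) * B * exp ((1 - u) • A) := by
    intro u
    have e1 : (u : ℝ) • (matCLE D A) = matCLE D (u • A) :=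
      ((matCLE D).toLinearMap.map_smul_of_tower u A).symm
    have e2 : ((1 - u) : ℝ) • (matCLE D A) = matCLE D ((1 - u) • A) :=
      ((matCLE D).toLinearMap.map_smul_of_tower (1 - u) A).symm
    rw [e1, e2, _root_.map_mul, _root_.map_mul, ← exp_transfer, ← exp_transfer,
      AlgEquiv.symm_apply_apply]
  calc (sR.comp (f'.comp eR)) B
      = sR (f' (matCLE D B)) := rfl
    _ = sR (∫ u in (0:ℝ)..1,
          exp (u • matCLE D A) * matCLE D B * exp ((1 - u) • matCLE D A)) := by rw [hkey]
    _ = ∫ u in (0:ℝ)..1,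
          sR (exp (u • matCLE D A) * matCLE D B * exp ((1 - u) • matCLE D A)) := hint
    _ = ∫ u in (0:ℝ)..1, exp (u • A) * B * exp ((1 - u) • A) := by
        refine intervalIntegral.integral_congr fun u _ => ?_
        show sR (exp (u • matCLE D A) * matCLE D B * exp ((1 - u) • matCLE D A))
            = exp (u • A) * B * exp ((1 - u) • A)
        rw [show (sR : _ → Matrix (Fin D) (Fin D) ℂ)
            = ((matCLE D).symm : _ → Matrix (Fin D) (Fin D) ℂ) from rfl]
        exact hterm u
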